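/- Let n > m ≥ 0, d ≥ 1, a ∈ ℂ×, and let Δ = Δ(f_a) ⊂ ℝ^{n+m-1} be the Newton polytope of f_a = ∑_{i=2}^n x_i^d − ∑_{j=1}^m y_j^d + a∏y_j^d/∏x_i^d. For any point Q in the cone ℝ_{≥0}·Δ, the weight w(Q) = min{w ≥ 0 : Q ∈ w·Δ} equals (1/d)·max{h_2(Q), …, h_{n+1}(Q), 0}, where h_{n+1}(Q) = ∑_i u_i + ∑_j v_j and h_{i_0}(Q) = ∑_i u_i + ∑_j v_j − (n−m)u_{i_0} for 2 ≤ i_0 ≤ n. -/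

import Mathlib

open Sum
open scoped Pointwise

/-- The Newton polytope `Δ(f_a)` of
`f_a = ∑_{i=2}^n x_i^d − ∑_{j=1}^m y_j^d + a∏y^d/∏x^d`, described by its defining
inequalities: `u_i + v_j ≥ 0`, `v_j ≥ 0`, and `h_k ≤ d` for `2 ≤ k ≤ n+1`, where
`h_{n+1} = ∑u + ∑v` and `h_{i₀} = ∑u + ∑v − (n−m)u_{i₀}`. -/
def NPolyIneq (n m d : ℕ) : Set (Fin (n - 1) ⊕ Fin m → ℝ) :=
  {x | (∀ i j, 0 ≤ x (inl i) + x (inr j)) ∧ (∀ j, 0 ≤ x (inr j)) ∧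
    ((∑ i, x (inl i)) + ∑ j, x (inr j)) ≤ d ∧
    ∀ i0 : Fin (n - 1),
      ((∑ i, x (inl i)) + ∑ j, x (inr j)) - ((n : ℝ) - m) * x (inl i0) ≤ d}

-- auxiliary: a point of the cone with all h_k ≤ 0 is zero
lemma cone_zero (n m : ℕ) (hnm : m < n)
    (Q : Fin (n - 1) ⊕ Fin m → ℝ)
    (hQ1 : ∀ i j, 0 ≤ Q (inl i) + Q (inr j)) (hQ2 : ∀ j, 0 ≤ Q (inr j))
    (hS : (∑ i, Q (inl i)) + ∑ j, Q (inr j) ≤ 0)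
    (hH : ∀ i0 : Fin (n - 1),
      ((∑ i, Q (inl i)) + ∑ j, Q (inr j)) - ((n : ℝ) - m) * Q (inl i0) ≤ 0) :
    Q = 0 := by
  have h1n : 1 ≤ n := by omega
  have hcast : ((n - 1 : ℕ) : ℝ) = (n : ℝ) - 1 := by
    push_cast [Nat.cast_sub h1n]; ring
  set A := ∑ i, Q (inl i) with hA
  set B := ∑ j, Q (inr j) with hB
  have hB0 : 0 ≤ B := Finset.sum_nonneg fun j _ => hQ2 j
  -- step 2 : 0 ≤ m*A + (n-1)*B
  have key2 : ∀ j, 0 ≤ A + ((n : ℝ) - 1) * Q (inr j) := by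
    intro j
    have h := Finset.sum_nonneg (fun i (_ : i ∈ Finset.univ) => hQ1 i j)
    rw [Finset.sum_add_distrib, Finset.sum_const, Finset.card_univ,
      Fintype.card_fin, nsmul_eq_mul, hcast] at h
    linarith
  have h2 : 0 ≤ (m : ℝ) * A + ((n : ℝ) - 1) * B := by
    have h := Finset.sum_nonneg (fun j (_ : j ∈ Finset.univ) => key2 j)
    rw [Finset.sum_add_distrib, Finset.sum_const, Finset.card_univ,
      Fintype.card_fin, nsmul_eq_mul, ← Finset.mul_sum] at h
    linarith
  -- step 3 : (n-1)*(A+B) - (n-m)*A ≤ 0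
  have key3 : ((n : ℝ) - 1) * (A + B) - ((n : ℝ) - m) * A ≤ 0 := by
    have h := Finset.sum_nonpos (fun i0 (_ : i0 ∈ Finset.univ) => hH i0)
    rw [Finset.sum_sub_distrib, Finset.sum_const, Finset.card_univ,
      Fintype.card_fin, nsmul_eq_mul, ← Finset.mul_sum, hcast] at h
    linarith
  have hA0 : A = 0 := by nlinarith
  have hBz : B = 0 := by
    rcases Nat.eq_zero_or_pos m with hm | hm
    · subst hm; simp [hB]
    · have hn2 : (2 : ℝ) ≤ n := by
        have : 2 ≤ n := by omega
        exact_mod_cast this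
      have hm1 : (1 : ℝ) ≤ m := by exact_mod_cast hm
      nlinarith
  have hv : ∀ j, Q (inr j) = 0 := fun j =>
    (Finset.sum_eq_zero_iff_of_nonneg (fun j _ => hQ2 j)).mp hBz j (Finset.mem_univ j)
  have hnm' : (0 : ℝ) < (n : ℝ) - m := by
    have : (m : ℝ) < n := by exact_mod_cast hnm
    linarith
  have hu0 : ∀ i, 0 ≤ Q (inl i) := by
    intro i
    have h := hH i
    rw [hA0, hBz] at h
    nlinarith
  have hu : ∀ i, Q (inl i) = 0 := fun i =>
    (Finset.sum_eq_zero_iff_of_nonneg (fun i _ => hu0 i)).mp hA0 i (Finset.mem_univ i)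
  funext x
  cases x with
  | inl i => exact hu i
  | inr j => exact hv j

/-- for a point `Q` of the cone `ℝ_{≥0}·Δ(f_a)`, the weight
`w(Q) = min{w ≥ 0 : Q ∈ w·Δ}` equals `(1/d)·max{h_2(Q),…,h_{n+1}(Q),0}`. -/
theorem stmt16 (n m d : ℕ) (hnm : m < n) (hd : 1 ≤ d) (a : ℂ) (ha : a ≠ 0)
    (Q : Fin (n - 1) ⊕ Fin m → ℝ)
    (hQ1 : ∀ i j, 0 ≤ Q (inl i) + Q (inr j)) (hQ2 : ∀ j, 0 ≤ Q (inr j)) :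
    IsLeast {w : ℝ | 0 ≤ w ∧ Q ∈ w • NPolyIneq n m d}
      ((d : ℝ)⁻¹ *
        max (Finset.univ.sup' Finset.univ_nonempty
          (fun o : Option (Fin (n - 1)) =>
            o.elim ((∑ i, Q (inl i)) + ∑ j, Q (inr j))
              (fun i0 => ((∑ i, Q (inl i)) + ∑ j, Q (inr j))
                - ((n : ℝ) - m) * Q (inl i0)))) 0) := by
  have hd0 : (0 : ℝ) < d := by exact_mod_cast hd
  set S := (∑ i, Q (inl i)) + ∑ j, Q (inr j) with hSdef
  set f : Option (Fin (n - 1)) → ℝ :=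
    fun o => o.elim S (fun i0 => S - ((n : ℝ) - m) * Q (inl i0)) with hf
  set T := Finset.univ.sup' Finset.univ_nonempty f with hTdef
  have hST : S ≤ T := Finset.le_sup' f (Finset.mem_univ none)
  have hiT : ∀ i0, S - ((n : ℝ) - m) * Q (inl i0) ≤ T :=
    fun i0 => Finset.le_sup' f (Finset.mem_univ (some i0))
  constructor
  · refine ⟨mul_nonneg (inv_nonneg.2 hd0.le) (le_max_right _ _), ?_⟩
    rcases le_or_gt T 0 with hT0 | hT0
    · have hM : max T 0 = 0 := max_eq_right hT0
      rw [hM, mul_zero]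
      have hQ0 : Q = 0 := cone_zero n m hnm Q hQ1 hQ2 (hST.trans hT0)
        (fun i0 => (hiT i0).trans hT0)
      rw [hQ0]
      refine ⟨0, ?_, smul_zero _⟩
      refine ⟨fun i j => by simp, fun j => by simp, by simp [hd0.le],
        fun i0 => by simp [hd0.le]⟩
    · have hM : max T 0 = T := max_eq_left hT0.le
      rw [hM]
      set w := (d : ℝ)⁻¹ * T with hw
      have hw0 : 0 < w := by positivity
      have hwinv : (0 : ℝ) ≤ w⁻¹ := by positivity
      have hwd : w * d = T := by rw [hw]; field_simp
      refine ⟨w⁻¹ • Q, ⟨?_, ?_, ?_, ?_⟩, smul_inv_smul₀ hw0.ne' Q⟩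
      · intro i j
        simp only [Pi.smul_apply, smul_eq_mul, ← mul_add]
        exact mul_nonneg hwinv (hQ1 i j)
      · intro j
        simp only [Pi.smul_apply, smul_eq_mul]
        exact mul_nonneg hwinv (hQ2 j)
      · have hsum : ((∑ i, (w⁻¹ • Q) (inl i)) + ∑ j, (w⁻¹ • Q) (inr j)) = w⁻¹ * S := by
          simp only [Pi.smul_apply, smul_eq_mul, ← Finset.mul_sum, hSdef]; ring
        rw [hsum]
        calc w⁻¹ * S ≤ w⁻¹ * (w * d) :=
              mul_le_mul_of_nonneg_left (by rw [hwd]; exact hST) hwinv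
          _ = d := by field_simp
      · intro i0
        have hsum : ((∑ i, (w⁻¹ • Q) (inl i)) + ∑ j, (w⁻¹ • Q) (inr j))
            - ((n : ℝ) - m) * (w⁻¹ • Q) (inl i0)
            = w⁻¹ * (S - ((n : ℝ) - m) * Q (inl i0)) := by
          simp only [Pi.smul_apply, smul_eq_mul, ← Finset.mul_sum, hSdef]; ring
        rw [hsum]
        calc w⁻¹ * (S - ((n : ℝ) - m) * Q (inl i0)) ≤ w⁻¹ * (w * d) :=
              mul_le_mul_of_nonneg_left (by rw [hwd]; exact hiT i0) hwinv
          _ = d := by field_simp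
  · rintro w ⟨hw0, hmem⟩
    rw [Set.mem_smul_set] at hmem
    obtain ⟨x, ⟨hx1, hx2, hx3, hx4⟩, hxQ⟩ := hmem
    have hQk : ∀ k, Q k = w * x k := fun k => by rw [← hxQ]; simp
    have hmax : max T 0 ≤ w * d := by
      refine max_le ?_ (mul_nonneg hw0 hd0.le)
      rw [hTdef]
      refine Finset.sup'_le _ _ fun o _ => ?_
      have hSx : S = w * ((∑ i, x (inl i)) + ∑ j, x (inr j)) := by
        simp only [hSdef, hQk, ← Finset.mul_sum]; ring
      cases o with
      | none =>
        show S ≤ w * d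
        rw [hSx]
        exact mul_le_mul_of_nonneg_left hx3 hw0
      | some i0 =>
        show S - ((n : ℝ) - m) * Q (inl i0) ≤ w * d
        rw [hSx, hQk (inl i0)]
        calc w * ((∑ i, x (inl i)) + ∑ j, x (inr j)) - ((n : ℝ) - m) * (w * x (inl i0))
            = w * (((∑ i, x (inl i)) + ∑ j, x (inr j)) - ((n : ℝ) - m) * x (inl i0)) := by ring
          _ ≤ w * d := mul_le_mul_of_nonneg_left (hx4 i0) hw0
    calc (d : ℝ)⁻¹ * max T 0 ≤ (d : ℝ)⁻¹ * (w * d) :=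
          mul_le_mul_of_nonneg_left hmax (inv_nonneg.2 hd0.le)
      _ = w := by field_simp
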